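/- Let C = C_{b,D} with 2 ≤ |D| ≤ b, increasing enumeration (k_n), and let s be the largest integer such that D is contained in an arithmetic progression of common difference s. If q is an integer with gcd(q, b) = 1 and gcd(q, s) = 1, then the sequence (s_b(k_n) mod q) is asymptotically uniformly distributed on ℤ_q, i.e., for every residue a mod q, lim_{N→∞} (1/N) |{n ≤ N : s_b(k_n) ≡ a (mod q)}| = 1/q. -/

import Mathlib

open Finset Complex Filter

/-! ### Exponential function basics -/

noncomputable def eq' (q : ℕ) (m : ℤ) : ℂ :=
  Complex.exp ((2 * Real.pi * m / q : ℝ) * Complex.I)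

lemma eq'_add (q : ℕ) (x y : ℤ) : eq' q (x + y) = eq' q x * eq' q y := by
  rw [eq', eq', eq', ← Complex.exp_add]
  congr 1
  push_cast
  ring

lemma eq'_abs (q : ℕ) (m : ℤ) : ‖eq' q m‖ = 1 :=
  Complex.norm_exp_ofReal_mul_I _

lemma eq'_zero (q : ℕ) : eq' q 0 = 1 := by
  simp [eq']

lemma eq'_nat_mul (q : ℕ) (t : ℕ) (m : ℤ) : eq' q (t * m) = eq' q m ^ t := by
  rw [eq', eq', ← Complex.exp_nat_mul]
  congr 1
  push_cast
  ring

lemma eq'_q_mul (q : ℕ) (hq : 0 < q) (m : ℤ) : eq' q ((q : ℤ) * m) = 1 := by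
  have hq' : (q : ℝ) ≠ 0 := Nat.cast_ne_zero.2 hq.ne'
  have hr : (2 * Real.pi * (((q : ℤ) * m : ℤ) : ℝ) / q : ℝ) = (m : ℝ) * (2 * Real.pi) := by
    push_cast
    field_simp
  rw [eq', hr]
  have : ((((m : ℝ)) * (2 * Real.pi) : ℝ) : ℂ) * Complex.I
      = (m : ℤ) * (2 * Real.pi * Complex.I) := by
    push_cast; ring
  rw [this, Complex.exp_int_mul_two_pi_mul_I]

lemma eq'_ne_one (q : ℕ) (hq : 0 < q) (m : ℤ) (hm : ¬ (q : ℤ) ∣ m) : eq' q m ≠ 1 := by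
  intro h
  rw [eq', Complex.exp_eq_one_iff] at h
  obtain ⟨n, hn⟩ := h
  have hI : (Complex.I : ℂ) ≠ 0 := Complex.I_ne_zero
  have hπ : Real.pi ≠ 0 := Real.pi_ne_zero
  have hq' : (q : ℝ) ≠ 0 := Nat.cast_ne_zero.2 hq.ne'
  have hn' : ((2 * Real.pi * m / q : ℝ) : ℂ) = ((n * (2 * Real.pi) : ℝ) : ℂ) := by
    have : ((n : ℂ) * (2 * Real.pi * Complex.I)) = ((n * (2 * Real.pi) : ℝ) : ℂ) * Complex.I := by
      push_cast; ring
    rw [this] at hn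
    exact mul_right_cancel₀ hI hn
  have hr : (2 * Real.pi * m / q : ℝ) = (n * (2 * Real.pi) : ℝ) := Complex.ofReal_inj.1 hn'
  have hmq : (m : ℝ) = (n : ℝ) * q := by
    field_simp at hr
    have h2 : (2 * Real.pi) * (m : ℝ) = (2 * Real.pi) * ((n : ℝ) * q) := by linear_combination (2 * Real.pi) * hr
    exact mul_left_cancel₀ (by positivity : (0:ℝ) < 2 * Real.pi).ne' h2
  have hmz : m = n * q := by exact_mod_cast hmq
  exact hm ⟨n, by rw [hmz, mul_comm]⟩

lemma eq'_orth (q : ℕ) (hq : 0 < q) (m : ℤ) :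
    ∑ t ∈ range q, eq' q (t * m) = if (q : ℤ) ∣ m then (q : ℂ) else 0 := by
  have hpow : ∀ t ∈ range q, eq' q (t * m) = eq' q m ^ t := fun t _ => eq'_nat_mul q t m
  rw [Finset.sum_congr rfl hpow]
  by_cases hd : (q : ℤ) ∣ m
  · obtain ⟨m', rfl⟩ := hd
    rw [eq'_q_mul q hq]
    simp
  · rw [if_neg hd, geom_sum_eq (eq'_ne_one q hq m hd)]
    rw [← eq'_nat_mul, eq'_q_mul q hq]
    simp

/-! ### Strict inequality for sums of distinct unit vectors -/

lemma abs_add_lt_two {z w : ℂ} (hz : ‖z‖ = 1) (hw : ‖w‖ = 1)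
    (hne : z ≠ w) : ‖z + w‖ < 2 := by
  set u := z * (starRingEnd ℂ) w with hu
  have hwne : w ≠ 0 := by intro h; rw [h] at hw; simp at hw
  have habs_u : ‖u‖ = 1 := by
    rw [hu, norm_mul, hz, Complex.norm_conj, hw, one_mul]
  have hune : u ≠ 1 := by
    intro h
    apply hne
    have : z * ((starRingEnd ℂ) w * w) = w := by
      rw [← mul_assoc, ← hu, h, one_mul]
    rw [mul_comm ((starRingEnd ℂ) w) w, Complex.mul_conj] at this
    have hn : Complex.normSq w = 1 := by
      rw [Complex.normSq_eq_norm_sq, hw]; norm_num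
    rw [hn] at this
    simpa using this
  have hre : u.re < 1 := by
    rcases lt_or_eq_of_le (le_trans (Complex.re_le_norm u) habs_u.le) with h | h
    · exact h
    · exfalso
      apply hune
      have hnsq : Complex.normSq u = 1 := by rw [Complex.normSq_eq_norm_sq, habs_u]; norm_num
      have him : u.im = 0 := by
        have := Complex.normSq_apply u
        nlinarith [this, hnsq, h]
      exact Complex.ext (by simpa using h) (by simpa using him)
  have hnsq : Complex.normSq (z + w) < 4 := by
    rw [Complex.normSq_add]
    rw [Complex.normSq_eq_norm_sq, Complex.normSq_eq_norm_sq, hz, hw]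
    nlinarith [hre]
  have h2 : ‖z + w‖ ^ 2 < 2 ^ 2 := by
    rw [← Complex.normSq_eq_norm_sq]; norm_num [hnsq]
  exact lt_of_pow_lt_pow_left₀ 2 (by norm_num) h2

lemma abs_sum_lt_card (c : ℕ) (hc : 2 ≤ c) (z : ℕ → ℂ) (hz : ∀ i < c, ‖z i‖ = 1)
    (i0 : ℕ) (hi0c : i0 < c) (hi00 : i0 ≠ 0) (hne : z i0 ≠ z 0) :
    ‖∑ i ∈ range c, z i‖ < c := by
  have h0mem : (0 : ℕ) ∈ range c := mem_range.2 (by omega)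
  have hi0mem : i0 ∈ (range c).erase 0 := mem_erase.2 ⟨hi00, mem_range.2 hi0c⟩
  have hsplit : ∑ i ∈ range c, z i
      = (z 0 + z i0) + ∑ i ∈ ((range c).erase 0).erase i0, z i := by
    rw [add_assoc, Finset.add_sum_erase _ z hi0mem, Finset.add_sum_erase _ z h0mem]
  rw [hsplit]
  have hcard : (((range c).erase 0).erase i0).card = c - 2 := by
    rw [Finset.card_erase_of_mem hi0mem, Finset.card_erase_of_mem h0mem, Finset.card_range]; omega
  have hrest : ‖∑ i ∈ ((range c).erase 0).erase i0, z i‖ ≤ (c : ℝ) - 2 := by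
    calc ‖∑ i ∈ ((range c).erase 0).erase i0, z i‖
        ≤ ∑ i ∈ ((range c).erase 0).erase i0, ‖z i‖ := by
          exact norm_sum_le _ _
      _ = ∑ i ∈ ((range c).erase 0).erase i0, 1 := by
          apply Finset.sum_congr rfl
          intro i hi
          have : i < c := mem_range.1 (mem_of_mem_erase (mem_of_mem_erase hi))
          exact hz i this
      _ = ((c - 2 : ℕ) : ℝ) := by rw [Finset.sum_const, hcard]; simp
      _ = (c : ℝ) - 2 := by rw [Nat.cast_sub hc]; norm_num
  have hpair : ‖z 0 + z i0‖ < 2 :=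
    abs_add_lt_two (hz 0 (by omega)) (hz i0 hi0c) (fun h => hne h.symm)
  calc ‖(z 0 + z i0) + ∑ i ∈ ((range c).erase 0).erase i0, z i‖
      ≤ ‖z 0 + z i0‖ + ‖∑ i ∈ ((range c).erase 0).erase i0, z i‖ :=
        norm_add_le _ _
    _ < 2 + ((c : ℝ) - 2) := by
        apply add_lt_add_of_lt_of_le hpair hrest
    _ = c := by ring

/-! ### Uniqueness of increasing enumerations -/

lemma strictMono_eq_of_range_eq {k g : ℕ → ℕ} (hk : StrictMono k) (hg : StrictMono g)
    (h : Set.range k = Set.range g) : k = g := by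
  funext n
  induction n using Nat.strong_induction_on with
  | _ n IH =>
    have h1 : k n ∈ Set.range g := h ▸ Set.mem_range_self n
    obtain ⟨j, hj⟩ := h1
    rcases lt_trichotomy j n with hjn | rfl | hjn
    · exfalso
      have : k j = g j := IH j hjn
      have : g j < g j := by
        calc g j = k j := this.symm
        _ < k n := hk hjn
        _ = g j := hj.symm
      exact lt_irrefl _ this
    · exact hj.symm
    · exfalso
      have h2 : g n ∈ Set.range k := h.symm ▸ Set.mem_range_self n
      obtain ⟨i, hi⟩ := h2
      have hgn : g n < k n := hj ▸ hg hjn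
      have hin : i < n := by
        by_contra hc
        exact absurd (hi ▸ hk.le_iff_le.2 (not_lt.1 hc) : k n ≤ g n) (not_le.2 hgn)
      have : g i = g n := (IH i hin) ▸ hi
      exact absurd (hg.injective this) (Nat.ne_of_lt hin)

/-! ### Fuel-based recursion for the `0 ∉ D` case -/

def gbAux (b c : ℕ) (w : ℕ → ℕ) : ℕ → ℕ → ℕ
  | 0, _ => 0
  | _ + 1, 0 => 0
  | fuel + 1, m + 1 => w (m % c) + b * gbAux b c w fuel (m / c)

lemma gbAux_irrel (b c : ℕ) (w : ℕ → ℕ) :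
    ∀ f1 : ℕ, ∀ f2 n : ℕ, n < f1 → n < f2 → gbAux b c w f1 n = gbAux b c w f2 n := by
  intro f1
  induction f1 with
  | zero => intro f2 n h1 _; omega
  | succ f ih =>
    intro f2 n h1 h2
    match f2, n with
    | f2 + 1, 0 => rfl
    | f2 + 1, m + 1 =>
      simp only [gbAux]
      have hm : m / c ≤ m := Nat.div_le_self m c
      rw [ih f2 (m / c) (by omega) (by omega)]

def gb (b c : ℕ) (w : ℕ → ℕ) (n : ℕ) : ℕ := gbAux b c w (n + 1) n

lemma gb_zero (b c : ℕ) (w : ℕ → ℕ) : gb b c w 0 = 0 := rfl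

lemma gb_succ (b c : ℕ) (w : ℕ → ℕ) (m : ℕ) :
    gb b c w (m + 1) = w (m % c) + b * gb b c w (m / c) := by
  show gbAux b c w (m + 2) (m + 1) = _
  simp only [gbAux, gb]
  have hm : m / c ≤ m := Nat.div_le_self m c
  rw [gbAux_irrel b c w (m + 1) (m / c + 1) (m / c) (by omega) (by omega)]

/-! ### Splitting a sum along mod/div -/

lemma sum_mod_div (c : ℕ) (hc : 0 < c) (F : ℕ → ℕ → ℂ) (N : ℕ) :
    ∑ n ∈ range N, F (n % c) (n / c)
      = (∑ j ∈ range (N / c), ∑ i ∈ range c, F i j) + ∑ i ∈ range (N % c), F i (N / c) := by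
  induction N with
  | zero => simp
  | succ N ih =>
    have hdm : c * (N / c) + N % c = N := Nat.div_add_mod N c
    have hmlt : N % c < c := Nat.mod_lt N hc
    rw [Finset.sum_range_succ, ih]
    rcases Nat.lt_or_ge (N % c + 1) c with h | h
    · have h1 : (N + 1) / c = N / c := by
        conv_lhs => rw [← hdm]
        rw [show c * (N / c) + N % c + 1 = c * (N / c) + (N % c + 1) by ring,
          Nat.mul_add_div hc, Nat.div_eq_of_lt h, Nat.add_zero]
      have h2 : (N + 1) % c = N % c + 1 := by
        conv_lhs => rw [← hdm]
        rw [show c * (N / c) + N % c + 1 = c * (N / c) + (N % c + 1) by ring,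
          Nat.mul_add_mod, Nat.mod_eq_of_lt h]
      rw [h1, h2, Finset.sum_range_succ]
      ring
    · have hceq : N % c + 1 = c := by omega
      have hkey : c * (N / c) + N % c + 1 = c * (N / c + 1) := by
        rw [Nat.mul_add, Nat.mul_one]; omega
      have h1 : (N + 1) / c = N / c + 1 := by
        conv_lhs => rw [← hdm]
        rw [hkey, Nat.mul_div_cancel_left _ hc]
      have h2 : (N + 1) % c = 0 := by
        conv_lhs => rw [← hdm]
        rw [hkey, Nat.mul_mod_right]
      have h3 : ∑ i ∈ range c, F i (N / c)
          = ∑ i ∈ range (N % c), F i (N / c) + F (N % c) (N / c) := by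
        have : ∑ i ∈ range c, F i (N / c) = ∑ i ∈ range (N % c + 1), F i (N / c) := by
          rw [hceq]
        rw [this, Finset.sum_range_succ]
      rw [h1, h2, Finset.sum_range_succ, h3]
      simp only [Finset.range_zero, Finset.sum_empty, add_zero]
      ring

/-! ### Weyl sums -/

noncomputable def Tsum (q : ℕ) (A : ℕ → ℕ) (t N : ℕ) : ℂ :=
  ∑ n ∈ range N, eq' q (t * A n)

noncomputable def Psum (q c : ℕ) (w : ℕ → ℕ) (t : ℕ) : ℂ :=
  ∑ i ∈ range c, eq' q (t * w i)

lemma Tsum_step (c q : ℕ) (hc : 2 ≤ c) (w A : ℕ → ℕ) (ε : ℕ) (hε : ε = 0 ∨ ε = 1)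
    (hA0 : A 0 = 0) (hrec : ∀ n, A (n + ε) = w (n % c) + A (n / c)) (t N : ℕ) :
    Tsum q A t (N + ε) = (ε : ℂ) + Psum q c w t * Tsum q A t (N / c)
      + (∑ i ∈ range (N % c), eq' q (t * w i)) * eq' q (t * A (N / c)) := by
  have hc0 : 0 < c := by omega
  have hterm : ∀ n : ℕ, eq' q (t * A (n + ε)) = eq' q (t * w (n % c)) * eq' q (t * A (n / c)) := by
    intro n
    rw [hrec n, ← eq'_add]
    congr 1
    push_cast
    ring
  have hmain : ∑ n ∈ range N, eq' q (t * A (n + ε))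
      = Psum q c w t * Tsum q A t (N / c)
        + (∑ i ∈ range (N % c), eq' q (t * w i)) * eq' q (t * A (N / c)) := by
    calc ∑ n ∈ range N, eq' q (t * A (n + ε))
        = ∑ n ∈ range N, (fun i j => eq' q (t * w i) * eq' q (t * A j)) (n % c) (n / c) := by
          exact Finset.sum_congr rfl (fun n _ => hterm n)
      _ = (∑ j ∈ range (N / c), ∑ i ∈ range c, eq' q (t * w i) * eq' q (t * A j))
          + ∑ i ∈ range (N % c), eq' q (t * w i) * eq' q (t * A (N / c)) :=
          sum_mod_div c hc0 (fun i j => eq' q (t * w i) * eq' q (t * A j)) N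
      _ = Psum q c w t * Tsum q A t (N / c)
          + (∑ i ∈ range (N % c), eq' q (t * w i)) * eq' q (t * A (N / c)) := by
          rw [← Finset.sum_mul]
          congr 1
          rw [Tsum, Finset.mul_sum]
          apply Finset.sum_congr rfl
          intro j _
          rw [← Finset.sum_mul]
          rfl
  rcases hε with rfl | rfl
  · rw [Nat.cast_zero, zero_add]
    rw [show Tsum q A t (N + 0) = ∑ n ∈ range N, eq' q (t * A (n + 0)) from rfl]
    exact hmain
  · rw [Tsum, Finset.sum_range_succ']
    rw [show (∑ n ∈ range N, eq' q (t * A (n + 1))) + eq' q (t * A 0)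
        = eq' q (t * A 0) + ∑ n ∈ range N, eq' q (t * A (n + 1)) from add_comm _ _]
    rw [hA0, Nat.cast_one]
    rw [show (t : ℤ) * (0 : ℕ) = 0 by push_cast; ring, eq'_zero, hmain]
    ring

lemma Tsum_bound (c q : ℕ) (hc : 2 ≤ c) (w A : ℕ → ℕ) (ε : ℕ) (hε : ε = 0 ∨ ε = 1)
    (hA0 : A 0 = 0) (hrec : ∀ n, A (n + ε) = w (n % c) + A (n / c)) (t : ℕ) :
    ∀ L M : ℕ, M < c ^ L →
      ‖Tsum q A t M‖
        ≤ (c + 1) * ∑ j ∈ range L, ‖Psum q c w t‖ ^ j := by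
  have hc0 : 0 < c := by omega
  set ρ := ‖Psum q c w t‖ with hρ
  have hρ0 : 0 ≤ ρ := norm_nonneg _
  intro L
  induction L with
  | zero =>
    intro M hM
    rw [pow_zero] at hM
    have hM0 : M = 0 := Nat.lt_one_iff.1 hM
    subst hM0
    simp [Tsum]
  | succ L IH =>
    intro M hM
    rcases Nat.eq_zero_or_pos M with rfl | hM1
    · simp only [Tsum, Finset.range_zero, Finset.sum_empty, norm_zero]
      positivity
    · have hεM : ε ≤ M := by rcases hε with rfl | rfl <;> omega
      have hM' : M = (M - ε) + ε := by omega
      set M₀ := M - ε with hM₀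
      have hdiv : M₀ / c < c ^ L := by
        rw [Nat.div_lt_iff_lt_mul hc0]
        calc M₀ ≤ M := by omega
          _ < c ^ (L + 1) := hM
          _ = c ^ L * c := by rw [pow_succ]
      have hstep := Tsum_step c q hc w A ε hε hA0 hrec t M₀
      rw [hM', hstep]
      have h1 : ‖(ε : ℂ) + Psum q c w t * Tsum q A t (M₀ / c)
          + (∑ i ∈ range (M₀ % c), eq' q (t * w i)) * eq' q (t * A (M₀ / c))‖
          ≤ (ε : ℝ) + ρ * ‖Tsum q A t (M₀ / c)‖ + ((M₀ % c : ℕ) : ℝ) := by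
        calc ‖_‖ ≤ ‖(ε : ℂ) + Psum q c w t * Tsum q A t (M₀ / c)‖
            + ‖(∑ i ∈ range (M₀ % c), eq' q (t * w i)) * eq' q (t * A (M₀ / c))‖ :=
              norm_add_le _ _
          _ ≤ ((ε : ℝ) + ρ * ‖Tsum q A t (M₀ / c)‖) + ((M₀ % c : ℕ) : ℝ) := by
              apply add_le_add
              · calc ‖(ε : ℂ) + Psum q c w t * Tsum q A t (M₀ / c)‖
                    ≤ ‖(ε : ℂ)‖ + ‖Psum q c w t * Tsum q A t (M₀ / c)‖ :=
                      norm_add_le _ _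
                  _ = (ε : ℝ) + ρ * ‖Tsum q A t (M₀ / c)‖ := by
                      rw [norm_mul, ← hρ]
                      congr 1
                      simp
              · rw [norm_mul, eq'_abs, mul_one]
                calc ‖∑ i ∈ range (M₀ % c), eq' q (t * w i)‖
                    ≤ ∑ i ∈ range (M₀ % c), ‖eq' q (t * w i)‖ :=
                      norm_sum_le _ _
                  _ = (M₀ % c : ℕ) := by
                      simp [eq'_abs]
      have hεle : (ε : ℝ) ≤ 1 := by rcases hε with rfl | rfl <;> norm_num
      have hmod : ((M₀ % c : ℕ) : ℝ) ≤ c := by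
        exact_mod_cast (Nat.mod_lt M₀ hc0).le
      calc ‖_‖ ≤ (ε : ℝ) + ρ * ‖Tsum q A t (M₀ / c)‖ + ((M₀ % c : ℕ) : ℝ) := h1
        _ ≤ 1 + ρ * ((c + 1) * ∑ j ∈ range L, ρ ^ j) + c := by
            exact add_le_add (add_le_add hεle
              (mul_le_mul_of_nonneg_left (IH _ hdiv) hρ0)) hmod
        _ = (c + 1) * (1 + ρ * ∑ j ∈ range L, ρ ^ j) := by ring
        _ = (c + 1) * ∑ j ∈ range (L + 1), ρ ^ j := by rw [geom_sum_succ]; ring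

lemma Tsum_tendsto (c q : ℕ) (hc : 2 ≤ c) (w A : ℕ → ℕ) (ε : ℕ) (hε : ε = 0 ∨ ε = 1)
    (hA0 : A 0 = 0) (hrec : ∀ n, A (n + ε) = w (n % c) + A (n / c)) (t : ℕ)
    (hρc : ‖Psum q c w t‖ < c) :
    Tendsto (fun N => ‖Tsum q A t N‖ / N) atTop (nhds 0) := by
  have hbound := Tsum_bound c q hc w A ε hε hA0 hrec t
  set ρ := ‖Psum q c w t‖ with hρdef
  have hρ0 : 0 ≤ ρ := norm_nonneg _
  have hc0 : (0:ℝ) < c := by positivity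
  set m : ℝ := max 1 ρ with hm
  have hm1 : 1 ≤ m := le_max_left _ _
  have hmc : m < c := by
    apply max_lt _ hρc
    exact_mod_cast hc
  set r : ℝ := m / c with hr
  have hr0 : 0 ≤ r := by positivity
  have hr1 : r < 1 := (div_lt_one hc0).2 hmc
  set u : ℕ → ℝ := fun L => (c + 1) * ((L + 1) * r ^ L) with hu
  have hulim : Tendsto u atTop (nhds 0) := by
    have h1 : Tendsto (fun L : ℕ => (L : ℝ) * r ^ L) atTop (nhds 0) := by
      have hs : Summable (fun n : ℕ => (n : ℝ) ^ 1 * r ^ n) :=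
        summable_pow_mul_geometric_of_norm_lt_one 1
          (by rwa [Real.norm_eq_abs, _root_.abs_of_nonneg hr0])
      simpa using hs.tendsto_atTop_zero
    have h2 : Tendsto (fun L : ℕ => r ^ L) atTop (nhds 0) :=
      tendsto_pow_atTop_nhds_zero_of_lt_one hr0 hr1
    have h3 : Tendsto (fun L : ℕ => ((L : ℝ) + 1) * r ^ L) atTop (nhds 0) := by
      have := h1.add h2
      simp only [add_zero] at this
      convert this using 2 with L
      ring
    have := h3.const_mul ((c : ℝ) + 1)
    simp only [mul_zero] at this
    exact this
  have hlog : Tendsto (fun N : ℕ => Nat.log c N) atTop atTop := by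
    apply tendsto_atTop_atTop.2
    intro K
    refine ⟨c ^ K, fun N hN => ?_⟩
    calc K = Nat.log c (c ^ K) := (Nat.log_pow (by omega) K).symm
      _ ≤ Nat.log c N := Nat.log_mono_right hN
  have hcomp : Tendsto (fun N : ℕ => u (Nat.log c N)) atTop (nhds 0) := hulim.comp hlog
  apply squeeze_zero' (Eventually.of_forall (fun N => by positivity))
  · filter_upwards [eventually_ge_atTop 1] with N hN
    set L := Nat.log c N with hL
    have hNc : N < c ^ (L + 1) := Nat.lt_pow_succ_log_self (by omega) N
    have hcLN : (c : ℝ) ^ L ≤ N := by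
      exact_mod_cast Nat.pow_log_le_self c (by omega)
    have hb := hbound (L + 1) N hNc
    have hgeom : ∑ j ∈ range (L + 1), ρ ^ j ≤ (L + 1) * m ^ L := by
      calc ∑ j ∈ range (L + 1), ρ ^ j ≤ ∑ j ∈ range (L + 1), m ^ L := by
            apply Finset.sum_le_sum
            intro j hj
            calc ρ ^ j ≤ m ^ j := pow_le_pow_left₀ hρ0 (le_max_right _ _) j
              _ ≤ m ^ L := pow_le_pow_right₀ hm1 (Nat.lt_succ_iff.1 (mem_range.1 hj))
        _ = (L + 1) * m ^ L := by
            rw [Finset.sum_const, Finset.card_range]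
            push_cast
            ring
    have hN0 : (0:ℝ) < N := by exact_mod_cast hN
    rw [div_le_iff₀ hN0]
    have hrc : r ^ L * (c : ℝ) ^ L = m ^ L := by
      rw [hr, div_pow, div_mul_cancel₀]
      positivity
    calc ‖Tsum q A t N‖ ≤ (c + 1) * ∑ j ∈ range (L + 1), ρ ^ j := hb
      _ ≤ (c + 1) * ((L + 1) * m ^ L) := by
          apply mul_le_mul_of_nonneg_left hgeom (by positivity)
      _ = u L * (c : ℝ) ^ L := by rw [hu]; simp only []; rw [← hrc]; ring
      _ ≤ u L * N := by
          apply mul_le_mul_of_nonneg_left hcLN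
          rw [hu]
          positivity
  · exact hcomp

/-! ### Weyl criterion assembly -/

lemma main_analytic (q : ℕ) (hq : 1 ≤ q) (A : ℕ → ℕ)
    (htT : ∀ t, 1 ≤ t → t < q →
      Tendsto (fun N => ‖Tsum q A t N‖ / N) atTop (nhds 0)) (a : ℕ) :
    Tendsto (fun N => (((range N).filter (fun n => A n % q = a % q)).card : ℝ) / N)
      atTop (nhds (1 / q)) := by
  have hq0 : 0 < q := hq
  have hqC : (q : ℂ) ≠ 0 := Nat.cast_ne_zero.2 (by omega)
  have hind : ∀ x : ℕ, (if x % q = a % q then (1:ℂ) else 0)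
      = (1 / q) * ∑ t ∈ range q, eq' q (t * ((x : ℤ) - a)) := by
    intro x
    rw [eq'_orth q hq0]
    have hdvd : ((q : ℤ) ∣ (x : ℤ) - a) ↔ (x % q = a % q) := by
      constructor
      · intro h
        exact (Nat.modEq_iff_dvd.2 h).symm
      · intro h
        exact Nat.modEq_iff_dvd.1 (h.symm : Nat.ModEq q a x)
    by_cases h : x % q = a % q
    · rw [if_pos h, if_pos (hdvd.2 h), one_div, inv_mul_cancel₀ hqC]
    · rw [if_neg h, if_neg (fun hd => h (hdvd.1 hd)), mul_zero]
  have hid : ∀ N : ℕ, (((range N).filter (fun n => A n % q = a % q)).card : ℂ)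
      = (1 / q) * ((N : ℂ)
        + ∑ t ∈ (range q).erase 0, Tsum q A t N * eq' q (-((t : ℤ) * a))) := by
    intro N
    have h1 : (((range N).filter (fun n => A n % q = a % q)).card : ℂ)
        = ∑ n ∈ range N, (if A n % q = a % q then (1:ℂ) else 0) := by
      rw [Finset.card_filter]
      push_cast
      rfl
    have h2 : ∀ t : ℕ, ∑ n ∈ range N, eq' q (t * ((A n : ℤ) - a))
        = Tsum q A t N * eq' q (-((t : ℤ) * a)) := by
      intro t
      rw [Tsum, Finset.sum_mul]
      apply Finset.sum_congr rfl
      intro n _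
      rw [← eq'_add]
      congr 1
      ring
    have h3 : Tsum q A 0 N * eq' q (-(((0:ℕ) : ℤ) * a)) = (N : ℂ) := by
      have : ∀ n : ℕ, eq' q (((0:ℕ) : ℤ) * (A n : ℤ)) = 1 := by
        intro n
        rw [show ((0:ℕ) : ℤ) * (A n : ℤ) = 0 by push_cast; ring, eq'_zero]
      rw [Tsum, Finset.sum_congr rfl (fun n _ => this n)]
      rw [show (-(((0:ℕ) : ℤ) * (a:ℤ))) = 0 by push_cast; ring, eq'_zero]
      simp
    calc (((range N).filter (fun n => A n % q = a % q)).card : ℂ)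
        = ∑ n ∈ range N, (if A n % q = a % q then (1:ℂ) else 0) := h1
      _ = ∑ n ∈ range N, (1 / q) * ∑ t ∈ range q, eq' q (t * ((A n : ℤ) - a)) := by
          exact Finset.sum_congr rfl (fun n _ => hind (A n))
      _ = (1 / q) * ∑ t ∈ range q, ∑ n ∈ range N, eq' q (t * ((A n : ℤ) - a)) := by
          rw [← Finset.mul_sum, Finset.sum_comm]
      _ = (1 / q) * ∑ t ∈ range q, Tsum q A t N * eq' q (-((t : ℤ) * a)) := by
          rw [Finset.sum_congr rfl (fun t _ => h2 t)]
      _ = (1 / q) * ((N : ℂ)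
          + ∑ t ∈ (range q).erase 0, Tsum q A t N * eq' q (-((t : ℤ) * a))) := by
          congr 1
          rw [← Finset.add_sum_erase _ _ (mem_range.2 hq0), h3]
  have hrem : Tendsto (fun N : ℕ => (1 / (q:ℂ))
      * ((∑ t ∈ (range q).erase 0, Tsum q A t N * eq' q (-((t : ℤ) * a))) / N))
      atTop (nhds 0) := by
    have hsum : Tendsto (fun N : ℕ =>
        ∑ t ∈ (range q).erase 0, Tsum q A t N * eq' q (-((t : ℤ) * a)) / N)
        atTop (nhds 0) := by
      have : (0 : ℂ) = ∑ t ∈ (range q).erase 0, 0 := by simp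
      rw [this]
      apply tendsto_finset_sum
      intro t ht
      have ht1 : 1 ≤ t := Nat.one_le_iff_ne_zero.2 (Finset.ne_of_mem_erase ht)
      have htq : t < q := mem_range.1 (Finset.mem_of_mem_erase ht)
      rw [tendsto_zero_iff_norm_tendsto_zero]
      have heq : ∀ N : ℕ, ‖Tsum q A t N * eq' q (-((t : ℤ) * a)) / N‖
          = ‖Tsum q A t N‖ / N := by
        intro N
        rw [norm_div, norm_mul, eq'_abs, mul_one, Complex.norm_natCast]
      exact Tendsto.congr (fun N => (heq N).symm) (htT t ht1 htq)
    have h4 := hsum.const_mul (1 / (q:ℂ))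
    simp only [mul_zero] at h4
    apply h4.congr
    intro N
    rw [Finset.sum_div]
  have hS : Tendsto (fun N : ℕ =>
      (((range N).filter (fun n => A n % q = a % q)).card : ℂ) / N)
      atTop (nhds (1 / q)) := by
    have hE : ∀ᶠ N : ℕ in atTop,
        (((range N).filter (fun n => A n % q = a % q)).card : ℂ) / N
        = 1 / q + (1 / (q:ℂ))
            * ((∑ t ∈ (range q).erase 0, Tsum q A t N * eq' q (-((t : ℤ) * a))) / N) := by
      filter_upwards [eventually_ge_atTop 1] with N hN
      have hNC : (N : ℂ) ≠ 0 := Nat.cast_ne_zero.2 (by omega)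
      rw [hid N]
      field_simp
    have hT : Tendsto (fun N : ℕ => 1 / (q:ℂ) + (1 / (q:ℂ))
        * ((∑ t ∈ (range q).erase 0, Tsum q A t N * eq' q (-((t : ℤ) * a))) / N))
        atTop (nhds (1 / q)) := by
      have := hrem.const_add (1 / (q:ℂ))
      simpa using this
    apply Tendsto.congr' _ hT
    filter_upwards [hE] with N h
    exact h.symm
  have hre := (Complex.continuous_re.tendsto _).comp hS
  have heq : (fun N : ℕ => ((((range N).filter (fun n => A n % q = a % q)).card : ℂ) / N).re)
      = fun N : ℕ => (((range N).filter (fun n => A n % q = a % q)).card : ℝ) / N := by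
    funext N
    rw [show ((((range N).filter (fun n => A n % q = a % q)).card : ℕ) : ℂ) / (N : ℂ)
        = (((((range N).filter (fun n => A n % q = a % q)).card : ℝ) / (N : ℝ) : ℝ) : ℂ) by
      push_cast; ring]
    exact Complex.ofReal_re _
  have hfin : ((1 : ℂ) / q).re = (1 : ℝ) / q := by
    rw [show ((1:ℂ) / q) = (((1 / q : ℝ)) : ℂ) by push_cast; ring]
    exact Complex.ofReal_re _
  rw [Function.comp_def, heq] at hre
  rw [← hfin]
  exact hre

/-! ### The original statement -/

/-- `D` is contained in an arithmetic progression of common difference `s`. -/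
def InAP (s : ℕ) (D : Finset ℕ) : Prop := ∃ a : ℕ, ∀ d ∈ D, ∃ m : ℕ, d = a + m * s

/-! ### Spectral gap -/

lemma psum_lt (c q s : ℕ) (hc : 2 ≤ c) (w : ℕ → ℕ) (D : Finset ℕ) (hD2 : 2 ≤ D.card)
    (hmem : ∀ i < c, w i ∈ D) (hsurj : ∀ x ∈ D, ∃ i, i < c ∧ w i = x)
    (hmin : ∀ x ∈ D, w 0 ≤ x)
    (hs : InAP s D) (hsmax : ∀ s', InAP s' D → s' ≤ s) (hqs : Nat.Coprime q s)
    (t : ℕ) (ht1 : 1 ≤ t) (htq : t < q) :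
    ‖Psum q c w t‖ < c := by
  have hq0 : 0 < q := by omega
  obtain ⟨x0, hx0, y0, hy0, hxy0⟩ := Finset.one_lt_card.1 (by omega : 1 < D.card)
  have hs0 : s ≠ 0 := by
    rintro rfl
    obtain ⟨a, ha⟩ := hs
    obtain ⟨mx, hmx⟩ := ha x0 hx0
    obtain ⟨my, hmy⟩ := ha y0 hy0
    omega
  have hw0D : w 0 ∈ D := hmem 0 (by omega)
  set g0 := D.gcd (fun x => x - w 0) with hg0def
  have hsdvd : ∀ x ∈ D, s ∣ (x - w 0) := by
    intro x hx
    obtain ⟨a, ha⟩ := hs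
    obtain ⟨mx, hmx⟩ := ha x hx
    obtain ⟨m0, hm0⟩ := ha (w 0) hw0D
    have hle : w 0 ≤ x := hmin x hx
    have hmle : m0 ≤ mx := by
      have h1 : m0 * s ≤ mx * s := by omega
      exact Nat.le_of_mul_le_mul_right h1 (by omega)
    refine ⟨mx - m0, ?_⟩
    zify [hle, hmle]
    have hmxz : (x : ℤ) = a + mx * s := by exact_mod_cast hmx
    have hm0z : ((w 0 : ℕ) : ℤ) = a + m0 * s := by exact_mod_cast hm0
    linear_combination hmxz - hm0z
  have hg0s : s ∣ g0 := Finset.dvd_gcd hsdvd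
  have hInAP : InAP g0 D := by
    refine ⟨w 0, fun d hd => ?_⟩
    obtain ⟨m, hm⟩ := Finset.gcd_dvd hd (f := fun x => x - w 0)
    have hm' : d - w 0 = g0 * m := hm
    rw [mul_comm] at hm'
    exact ⟨m, by have := hmin d hd; omega⟩
  have hg0le : g0 ≤ s := hsmax g0 hInAP
  have hg00 : g0 ≠ 0 := by
    intro h
    rw [hg0def, Finset.gcd_eq_zero_iff] at h
    have hx := h x0 hx0
    have hy := h y0 hy0
    have := hmin x0 hx0
    have := hmin y0 hy0
    omega
  have hg0eq : g0 = s := le_antisymm hg0le (Nat.le_of_dvd (Nat.pos_of_ne_zero hg00) hg0s)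
  have hex : ∃ i0, i0 < c ∧ i0 ≠ 0 ∧ eq' q (t * w i0) ≠ eq' q (t * w 0) := by
    by_contra hcon
    push_neg at hcon
    have hall : ∀ i, i < c → eq' q (t * w i) = eq' q (t * w 0) := by
      intro i hi
      rcases Nat.eq_zero_or_pos i with rfl | hi0
      · rfl
      · exact hcon i hi (by omega)
    have hdvd : ∀ x ∈ D, q ∣ t * (x - w 0) := by
      intro x hx
      obtain ⟨i, hic, hwi⟩ := hsurj x hx
      have heq := hall i hic
      rw [hwi] at heq
      have hdvdZ : (q : ℤ) ∣ ((t : ℤ) * x - t * w 0) := by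
        by_contra hnd
        apply eq'_ne_one q hq0 _ hnd
        have hadd := eq'_add q ((t : ℤ) * x - t * w 0) ((t : ℤ) * w 0)
        rw [sub_add_cancel, heq] at hadd
        have hne0 : eq' q ((t : ℤ) * w 0) ≠ 0 := by
          intro h0
          have := eq'_abs q ((t : ℤ) * w 0)
          rw [h0] at this
          simp at this
        field_simp at hadd
        exact hadd.symm
      have hcast : ((t * (x - w 0) : ℕ) : ℤ) = (t : ℤ) * x - t * w 0 := by
        push_cast [Nat.cast_sub (hmin x hx)]
        ring
      exact_mod_cast hcast ▸ hdvdZ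
    have hqtg : q ∣ t * g0 := by
      have h1 : (D.gcd fun x => t * (x - w 0)) = t * g0 := by
        rw [hg0def, Finset.gcd_mul_left]
        simp
      rw [← h1]
      exact Finset.dvd_gcd hdvd
    rw [hg0eq] at hqtg
    have : q ∣ t := hqs.dvd_of_dvd_mul_right hqtg
    have := Nat.le_of_dvd (by omega) this
    omega
  obtain ⟨i0, hi0c, hi00, hne⟩ := hex
  exact abs_sum_lt_card c hc (fun i => eq' q (t * w i)) (fun i _ => eq'_abs q _) i0 hi0c hi00 hne

/-! ### Combinatorics of the enumeration -/

lemma G_strictMono (b c : ℕ) (w : ℕ → ℕ) (hb : 2 ≤ b) (hc : 2 ≤ c)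
    (hwmono : ∀ i j, i < j → j < c → w i < w j) (hwb : ∀ i < c, w i < b)
    (ε : ℕ) (hε : ε = 0 ∨ ε = 1) (G : ℕ → ℕ) (hG0 : G 0 = 0)
    (hrec : ∀ n, G (n + ε) = w (n % c) + b * G (n / c)) (hpos : ε = 1 → 0 < w 0) :
    StrictMono G := by
  have key : ∀ m, ∀ n, n < m → G n < G m := by
    intro m
    induction m using Nat.strong_induction_on with
    | _ m IH =>
      intro n hnm
      have hm1 : 1 ≤ m := by omega
      have hεm : ε ≤ m := by omega
      set m₀ := m - ε with hm₀
      have hmeq : m = m₀ + ε := by omega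
      have hGm : G m = w (m₀ % c) + b * G (m₀ / c) := by rw [hmeq]; exact hrec m₀
      rcases Nat.lt_or_ge n ε with hnε | hnε
      · have hε1 : ε = 1 := by omega
        have hn0 : n = 0 := by omega
        rw [hn0, hG0, hGm]
        have h1 : 0 < w (m₀ % c) := by
          rcases Nat.eq_zero_or_pos (m₀ % c) with h | h
          · rw [h]; exact hpos hε1
          · calc 0 < w 0 := hpos hε1
              _ < w (m₀ % c) := hwmono 0 _ h (Nat.mod_lt _ (by omega))
        omega
      · set n₀ := n - ε with hn₀
        have hneq : n = n₀ + ε := by omega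
        have hn₀m₀ : n₀ < m₀ := by omega
        have hGn : G n = w (n₀ % c) + b * G (n₀ / c) := by rw [hneq]; exact hrec n₀
        rw [hGn, hGm]
        rcases Nat.lt_or_ge (n₀ / c) (m₀ / c) with hdiv | hdiv
        · have hm₀1 : 1 ≤ m₀ := by omega
          have hIH : G (n₀ / c) < G (m₀ / c) := by
            apply IH (m₀ / c) _ _ hdiv
            calc m₀ / c < m₀ := Nat.div_lt_self (by omega) (by omega)
              _ ≤ m := by omega
          have hwn : w (n₀ % c) ≤ b - 1 := by
            have := hwb (n₀ % c) (Nat.mod_lt _ (by omega))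
            omega
          calc w (n₀ % c) + b * G (n₀ / c) ≤ (b - 1) + b * G (n₀ / c) := by omega
            _ < b * (G (n₀ / c) + 1) := by
                rw [Nat.mul_add, Nat.mul_one]
                omega
            _ ≤ b * G (m₀ / c) := Nat.mul_le_mul_left b (by omega)
            _ ≤ w (m₀ % c) + b * G (m₀ / c) := by omega
        · have hdeq : n₀ / c = m₀ / c := by
            have h1 : n₀ / c ≤ m₀ / c := Nat.div_le_div_right (by omega)
            omega
          have hmod : n₀ % c < m₀ % c := by
            have h1 : c * (n₀ / c) + n₀ % c = n₀ := Nat.div_add_mod n₀ c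
            have h2 : c * (m₀ / c) + m₀ % c = m₀ := Nat.div_add_mod m₀ c
            rw [hdeq] at h1
            omega
          have := hwmono _ _ hmod (Nat.mod_lt _ (by omega : 0 < c))
          rw [hdeq]
          omega
  exact fun n m h => key m n h

lemma G_range (b c : ℕ) (w : ℕ → ℕ) (hb : 2 ≤ b) (hc : 2 ≤ c) (D : Finset ℕ)
    (hwb : ∀ i < c, w i < b)
    (hmem : ∀ i < c, w i ∈ D) (hsurj : ∀ x ∈ D, ∃ i, i < c ∧ w i = x)
    (ε : ℕ) (hε : ε = 0 ∨ ε = 1) (G : ℕ → ℕ) (hG0 : G 0 = 0)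
    (hrec : ∀ n, G (n + ε) = w (n % c) + b * G (n / c)) :
    Set.range G = {m : ℕ | ∀ d ∈ Nat.digits b m, d ∈ D} := by
  ext m
  simp only [Set.mem_range, Set.mem_setOf_eq]
  constructor
  · rintro ⟨n, rfl⟩
    induction n using Nat.strong_induction_on with
    | _ n IH =>
      rcases Nat.eq_zero_or_pos n with rfl | hn1
      · rw [hG0]
        simp
      · have hεn : ε ≤ n := by omega
        set n₀ := n - ε with hn₀
        have hneq : n = n₀ + ε := by omega
        have hGn : G n = w (n₀ % c) + b * G (n₀ / c) := by rw [hneq]; exact hrec n₀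
        rcases Nat.eq_zero_or_pos (G n) with hz | hz
        · rw [hz]; simp
        · have hwlt : w (n₀ % c) < b := hwb _ (Nat.mod_lt _ (by omega))
          have hdig : Nat.digits b (G n) = w (n₀ % c) :: Nat.digits b (G (n₀ / c)) := by
            rw [Nat.digits_def' (by omega : 1 < b) hz, hGn]
            congr 1
            · rw [Nat.add_mul_mod_self_left, Nat.mod_eq_of_lt hwlt]
            · rw [Nat.add_mul_div_left _ _ (by omega : 0 < b),
                Nat.div_eq_of_lt hwlt, Nat.zero_add]
          rw [hdig]
          intro d hd
          rcases List.mem_cons.1 hd with rfl | hd'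
          · exact hmem _ (Nat.mod_lt _ (by omega))
          · have hlt : n₀ / c < n := by
              rcases hε with rfl | rfl
              · simp only [Nat.add_zero] at hneq
                rw [hneq]
                exact Nat.div_lt_self (by omega) (by omega)
              · calc n₀ / c ≤ n₀ := Nat.div_le_self _ _
                  _ < n := by omega
            exact IH (n₀ / c) hlt d hd'
  · intro hm
    induction m using Nat.strong_induction_on with
    | _ m IH =>
      rcases Nat.eq_zero_or_pos m with rfl | hm1
      · exact ⟨0, hG0⟩
      · have hdig := Nat.digits_def' (by omega : 1 < b) hm1
        have hmemD : m % b ∈ D := hm _ (hdig ▸ List.mem_cons_self)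
        obtain ⟨i, hic, hwi⟩ := hsurj _ hmemD
        have htail : ∀ d ∈ Nat.digits b (m / b), d ∈ D := by
          intro d hd
          exact hm d (hdig ▸ List.mem_cons_of_mem _ hd)
        have hlt : m / b < m := Nat.div_lt_self hm1 (by omega)
        obtain ⟨n', hn'⟩ := IH (m / b) hlt htail
        refine ⟨i + c * n' + ε, ?_⟩
        rw [hrec (i + c * n')]
        rw [Nat.add_mul_mod_self_left, Nat.mod_eq_of_lt hic,
          Nat.add_mul_div_left _ _ (by omega : 0 < c), Nat.div_eq_of_lt hic, Nat.zero_add,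
          hwi, hn']
        exact Nat.mod_add_div m b

/-! ### Main theorem -/

/-- Let `(k_n)` enumerate the Cantor set `C_{b,D}` (base `b`, digits `D`,
`2 ≤ |D| ≤ b`) in increasing order, and let `s` be the largest integer such that `D`
lies in an arithmetic progression of common difference `s`. If `gcd(q,b) = 1` and
`gcd(q,s) = 1`, then `(s_b(k_n) mod q)` is asymptotically uniformly distributed:
for every residue `a`, the proportion of `n < N` with `s_b(k_n) ≡ a (mod q)`
tends to `1/q`. -/
theorem cantor_digitSum_uniform_mod_q
    (b : ℕ) (hb : 2 ≤ b) (D : Finset ℕ) (hD : 2 ≤ D.card) (hDb : D.card ≤ b)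
    (hDsub : ∀ d ∈ D, d < b)
    (k : ℕ → ℕ) (hk : StrictMono k)
    (hkr : Set.range k = {m : ℕ | ∀ d ∈ Nat.digits b m, d ∈ D})
    (s : ℕ) (hs : InAP s D) (hsmax : ∀ s', InAP s' D → s' ≤ s)
    (q : ℕ) (hqb : Nat.Coprime q b) (hqs : Nat.Coprime q s) :
    ∀ a : ℕ, Filter.Tendsto
      (fun N => (((Finset.range N).filter
          (fun n => (Nat.digits b (k n)).sum % q = a % q)).card : ℝ) / (N : ℝ))
      Filter.atTop (nhds (1 / (q : ℝ))) := by
  intro a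
  have hq1 : 1 ≤ q := by
    rcases Nat.eq_zero_or_pos q with rfl | h
    · exfalso
      rw [Nat.Coprime, Nat.gcd_zero_left] at hqb
      omega
    · exact h
  -- the ordered enumeration of digits
  obtain ⟨w, hwmono, hwmem, hwsurj⟩ :
      ∃ w : ℕ → ℕ, (∀ i j, i < j → j < D.card → w i < w j)
        ∧ (∀ i < D.card, w i ∈ D) ∧ (∀ x ∈ D, ∃ i, i < D.card ∧ w i = x) := by
    refine ⟨fun i => if h : i < D.card then D.orderEmbOfFin rfl ⟨i, h⟩ else 0, ?_, ?_, ?_⟩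
    · intro i j hij hj
      simp only [dif_pos (lt_trans hij hj), dif_pos hj]
      exact (D.orderEmbOfFin rfl).strictMono
        (show (⟨i, lt_trans hij hj⟩ : Fin D.card) < ⟨j, hj⟩ from hij)
    · intro i hi
      simp only [dif_pos hi]
      exact Finset.orderEmbOfFin_mem D rfl ⟨i, hi⟩
    · intro x hx
      have hx' : x ∈ Set.range (D.orderEmbOfFin rfl) := by
        rw [Finset.range_orderEmbOfFin]
        exact hx
      obtain ⟨⟨i, hi⟩, hix⟩ := hx'
      exact ⟨i, hi, by simp only [dif_pos hi]; exact hix⟩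
  set c := D.card with hcdef
  have hc : 2 ≤ c := hD
  have hwb : ∀ i < c, w i < b := fun i hi => hDsub _ (hwmem i hi)
  have hwmin : ∀ x ∈ D, w 0 ≤ x := by
    intro x hx
    obtain ⟨i, hic, hwi⟩ := hwsurj x hx
    rcases Nat.eq_zero_or_pos i with rfl | hi0
    · omega
    · have := hwmono 0 i hi0 hic
      omega
  -- k 0 = 0
  have h0C : (0:ℕ) ∈ Set.range k := by
    rw [hkr]
    simp
  have hk0 : k 0 = 0 := by
    obtain ⟨n0, hn0⟩ := h0C
    have := hk.monotone (Nat.zero_le n0)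
    omega
  -- the recursion for k
  obtain ⟨ε, hε, hkrec, hw0ε⟩ :
      ∃ ε, (ε = 0 ∨ ε = 1) ∧ (∀ n, k (n + ε) = w (n % c) + b * k (n / c))
        ∧ (ε = 0 → w 0 = 0) := by
    by_cases h0D : (0:ℕ) ∈ D
    · -- case 0 ∈ D
      have hw0 : w 0 = 0 := by
        obtain ⟨i, hic, hwi⟩ := hwsurj 0 h0D
        have hle : w 0 ≤ w i := by
          rcases Nat.eq_zero_or_pos i with rfl | hi0
          · exact le_refl _
          · exact le_of_lt (hwmono 0 i hi0 hic)
        rw [hwi] at hle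
        omega
      refine ⟨0, Or.inl rfl, ?_, fun _ => hw0⟩
      set G : ℕ → ℕ := fun n => Nat.ofDigits b (List.map w (Nat.digits c n)) with hGdef
      have hG0 : G 0 = 0 := by simp [hGdef]
      have hGrec : ∀ n, G (n + 0) = w (n % c) + b * G (n / c) := by
        intro n
        rcases Nat.eq_zero_or_pos n with rfl | hn
        · simp [hG0, hw0]
        · show G n = _
          rw [hGdef]
          simp only []
          rw [Nat.digits_def' (by omega : 1 < c) hn, List.map_cons, Nat.ofDigits_cons]
      have hGsm : StrictMono G :=
        G_strictMono b c w hb hc hwmono hwb 0 (Or.inl rfl) G hG0 hGrec (by omega)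
      have hGr : Set.range G = {m : ℕ | ∀ d ∈ Nat.digits b m, d ∈ D} :=
        G_range b c w hb hc D hwb hwmem hwsurj 0 (Or.inl rfl) G hG0 hGrec
      have hkG : k = G := strictMono_eq_of_range_eq hk hGsm (hkr.trans hGr.symm)
      intro n
      rw [hkG]
      exact hGrec n
    · -- case 0 ∉ D
      have hw0 : 0 < w 0 := by
        rcases Nat.eq_zero_or_pos (w 0) with h | h
        · exact absurd (h ▸ hwmem 0 (by omega)) h0D
        · exact h
      refine ⟨1, Or.inr rfl, ?_, by omega⟩
      have hG0 : gb b c w 0 = 0 := gb_zero b c w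
      have hGrec : ∀ n, gb b c w (n + 1) = w (n % c) + b * gb b c w (n / c) := gb_succ b c w
      have hGsm : StrictMono (gb b c w) :=
        G_strictMono b c w hb hc hwmono hwb 1 (Or.inr rfl) _ hG0 hGrec (fun _ => hw0)
      have hGr : Set.range (gb b c w) = {m : ℕ | ∀ d ∈ Nat.digits b m, d ∈ D} :=
        G_range b c w hb hc D hwb hwmem hwsurj 1 (Or.inr rfl) _ hG0 hGrec
      have hkG : k = gb b c w := strictMono_eq_of_range_eq hk hGsm (hkr.trans hGr.symm)
      intro n
      rw [hkG]
      exact hGrec n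
  -- digit sums
  set A : ℕ → ℕ := fun n => (Nat.digits b (k n)).sum with hAdef
  have hA0 : A 0 = 0 := by simp [hAdef, hk0]
  have hArec : ∀ n, A (n + ε) = w (n % c) + A (n / c) := by
    intro n
    have hkn := hkrec n
    rcases Nat.eq_zero_or_pos (k (n + ε)) with hz | hz
    · have hn0 : n + ε = 0 := by
        by_contra hcon
        have : k 0 < k (n + ε) := hk (by omega)
        omega
      have hε0 : ε = 0 := by omega
      have hn00 : n = 0 := by omega
      subst hε0; subst hn00
      simp only [Nat.zero_mod, Nat.zero_div, hA0, hAdef]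
      rw [hz, hw0ε rfl]
      simp
    · have hwlt : w (n % c) < b := hwb _ (Nat.mod_lt _ (by omega))
      have hdig : Nat.digits b (k (n + ε)) = w (n % c) :: Nat.digits b (k (n / c)) := by
        rw [Nat.digits_def' (by omega : 1 < b) hz, hkn]
        congr 1
        · rw [Nat.add_mul_mod_self_left, Nat.mod_eq_of_lt hwlt]
        · rw [Nat.add_mul_div_left _ _ (by omega : 0 < b),
            Nat.div_eq_of_lt hwlt, Nat.zero_add]
      show (Nat.digits b (k (n + ε))).sum = w (n % c) + (Nat.digits b (k (n / c))).sum
      rw [hdig, List.sum_cons]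
  -- spectral gap and conclusion
  have hspec : ∀ t, 1 ≤ t → t < q → ‖Psum q c w t‖ < c :=
    fun t h1 h2 => psum_lt c q s hc w D hD hwmem hwsurj hwmin hs hsmax hqs t h1 h2
  have htT : ∀ t, 1 ≤ t → t < q →
      Tendsto (fun N => ‖Tsum q A t N‖ / N) atTop (nhds 0) :=
    fun t h1 h2 => Tsum_tendsto c q hc w A ε hε hA0 hArec t (hspec t h1 h2)
  exact main_analytic q hq1 A htT a
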